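/- Let X and Y be nonnegative random variables with equal finite right endpoints of support and let w be a decreasing weight function. If X ≤_disp Y then ξ̄^w(X) ≥ ξ̄^w(Y), and if X ≥_disp Y then ξ̄^w(X) ≤ ξ̄^w(Y). -/

import Mathlib

open MeasureTheory Set Filter

lemma gwcpj_aux (f g w Finv Ginv : ℝ → ℝ) (M : ℝ)
    (hf : ∀ x, 0 < f x) (hg : ∀ x, 0 < g x)
    (hY0 : ∀ u ∈ Ioo (0:ℝ) 1, 0 ≤ Ginv u)
    (hF' : ∀ u ∈ Ioo (0:ℝ) 1, HasDerivAt Finv (1 / f (Finv u)) u)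
    (hG' : ∀ u ∈ Ioo (0:ℝ) 1, HasDerivAt Ginv (1 / g (Ginv u)) u)
    (hFM : Tendsto Finv (nhdsWithin 1 (Iio 1)) (nhds M))
    (hGM : Tendsto Ginv (nhdsWithin 1 (Iio 1)) (nhds M))
    (hwdec : Antitone w) (hwnn : ∀ x, 0 ≤ w x)
    (hle : ∀ u ∈ Ioo (0:ℝ) 1, g (Ginv u) ≤ f (Finv u)) :
    ∫ u in (0:ℝ)..1, u ^ 2 * w (Finv u) / f (Finv u) ≤
      ∫ u in (0:ℝ)..1, u ^ 2 * w (Ginv u) / g (Ginv u) := by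
  -- Ginv is strictly monotone on (0,1)
  have hGcont : ContinuousOn Ginv (Ioo (0:ℝ) 1) :=
    fun u hu => (hG' u hu).continuousAt.continuousWithinAt
  have hGmono : StrictMonoOn Ginv (Ioo (0:ℝ) 1) := by
    apply strictMonoOn_of_deriv_pos (convex_Ioo 0 1) hGcont
    intro x hx
    rw [interior_Ioo] at hx
    rw [(hG' x hx).deriv]
    exact one_div_pos.2 (hg _)
  -- limit of Ginv at 0⁺
  set L : ℝ := sInf (Ginv '' Ioo 0 1) with hL
  have hbdd : BddBelow (Ginv '' Ioo (0:ℝ) 1) :=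
    ⟨0, by rintro y ⟨u, hu, rfl⟩; exact hY0 u hu⟩
  have hGL : Tendsto Ginv (nhdsWithin 0 (Ioi 0)) (nhds L) :=
    MonotoneOn.tendsto_nhdsWithin_Ioo_right ⟨1/2, by norm_num⟩ hGmono.monotoneOn hbdd
  -- extension of Ginv continuous on [0,1]
  set Gt : ℝ → ℝ := fun u => if u ≤ 0 then L else if u < 1 then Ginv u else M with hGt
  have hGtEq : ∀ u ∈ Ioo (0:ℝ) 1, Gt u = Ginv u := by
    intro u hu
    simp [hGt, not_le.2 hu.1, hu.2]
  have hGtderiv : ∀ x ∈ Ioo (0:ℝ) 1, HasDerivAt Gt (1 / g (Ginv x)) x := by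
    intro x hx
    apply (hG' x hx).congr_of_eventuallyEq
    filter_upwards [isOpen_Ioo.mem_nhds hx] with y hy using hGtEq y hy
  have hGtcont : ContinuousOn Gt (Icc (0:ℝ) 1) := by
    intro u hu
    rcases eq_or_lt_of_le hu.1 with h0 | h0
    · -- u = 0
      subst h0
      have hGt0 : Gt 0 = L := by simp [hGt]
      unfold ContinuousWithinAt
      rw [hGt0]
      have hsplit : Icc (0:ℝ) 1 = {0} ∪ Ioc 0 1 := by
        ext x
        simp only [mem_Icc, mem_union, mem_singleton_iff, mem_Ioc]
        constructor
        · rintro ⟨h1, h2⟩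
          rcases eq_or_lt_of_le h1 with h | h
          · exact Or.inl h.symm
          · exact Or.inr ⟨h, h2⟩
        · rintro (rfl | ⟨h1, h2⟩) <;> constructor <;> linarith
      rw [hsplit, nhdsWithin_union, tendsto_sup]
      constructor
      · rw [nhdsWithin_singleton]
        have h := tendsto_pure_nhds Gt 0
        rwa [hGt0] at h
      · have hle' : nhdsWithin (0:ℝ) (Ioc 0 1) ≤ nhdsWithin 0 (Ioi 0) :=
          nhdsWithin_mono 0 Ioc_subset_Ioi_self
        refine (hGL.mono_left hle').congr' ?_
        have hIio : ∀ᶠ x in nhdsWithin (0:ℝ) (Ioc 0 1), x < 1 :=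
          eventually_nhdsWithin_of_eventually_nhds
            (Filter.Tendsto.eventually_lt_const one_pos tendsto_id)
        filter_upwards [self_mem_nhdsWithin, hIio] with x hx hx1
        exact (hGtEq x ⟨hx.1, hx1⟩).symm
    · rcases eq_or_lt_of_le hu.2 with h1 | h1
      · -- u = 1
        subst h1
        have hGt1 : Gt 1 = M := by norm_num [hGt]
        unfold ContinuousWithinAt
        rw [hGt1]
        have hsplit : Icc (0:ℝ) 1 = Ico 0 1 ∪ {1} := by
          ext x
          simp only [mem_Icc, mem_union, mem_singleton_iff, mem_Ico]
          constructor
          · rintro ⟨ha, hb⟩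
            rcases eq_or_lt_of_le hb with h | h
            · exact Or.inr h
            · exact Or.inl ⟨ha, h⟩
          · rintro (⟨ha, hb⟩ | rfl) <;> constructor <;> linarith
        rw [hsplit, nhdsWithin_union, tendsto_sup]
        constructor
        · have hle' : nhdsWithin (1:ℝ) (Ico 0 1) ≤ nhdsWithin 1 (Iio 1) :=
            nhdsWithin_mono 1 Ico_subset_Iio_self
          refine (hGM.mono_left hle').congr' ?_
          have hIoi : ∀ᶠ x in nhdsWithin (1:ℝ) (Ico 0 1), 0 < x :=
            eventually_nhdsWithin_of_eventually_nhds
              (Filter.Tendsto.eventually_const_lt one_pos tendsto_id)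
          filter_upwards [self_mem_nhdsWithin, hIoi] with x hx hx0
          exact (hGtEq x ⟨hx0, hx.2⟩).symm
        · rw [nhdsWithin_singleton]
          have h := tendsto_pure_nhds Gt 1
          rwa [hGt1] at h
      · -- interior point
        exact ((hGtderiv u ⟨h0, h1⟩).continuousAt).continuousWithinAt
  -- derivative of Gt is integrable on (0,1]
  have hint : IntegrableOn (fun u => 1 / g (Ginv u)) (Ioc (0:ℝ) 1) :=
    intervalIntegral.integrableOn_deriv_of_nonneg hGtcont hGtderiv (fun x hx => one_div_nonneg.2 (hg _).le)
  have hintIoo : IntegrableOn (fun u => 1 / g (Ginv u)) (Ioo (0:ℝ) 1) :=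
    hint.mono_set Ioo_subset_Ioc_self
  -- measurability
  have hGinvAE : AEMeasurable Ginv (volume.restrict (Ioo (0:ℝ) 1)) :=
    hGcont.aemeasurable measurableSet_Ioo
  have hinvAE : AEMeasurable (fun u => 1 / g (Ginv u)) (volume.restrict (Ioo (0:ℝ) 1)) := by
    apply ((measurable_deriv Gt).aemeasurable).congr
    filter_upwards [ae_restrict_mem measurableSet_Ioo] with x hx
    exact (hGtderiv x hx).deriv
  have hφGmeas : AEStronglyMeasurable (fun u => u ^ 2 * w (Ginv u) / g (Ginv u))
      (volume.restrict (Ioo (0:ℝ) 1)) := by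
    have hm : AEMeasurable (fun u => u ^ 2 * w (Ginv u) * (1 / g (Ginv u)))
        (volume.restrict (Ioo (0:ℝ) 1)) :=
      (((measurable_id.pow_const 2).aemeasurable).mul
        (hwdec.measurable.comp_aemeasurable hGinvAE)).mul hinvAE
    refine hm.aestronglyMeasurable.congr ?_
    filter_upwards with x
    rw [mul_one_div]
  -- integrability of the dominating integrand
  have hφGint : IntegrableOn (fun u => u ^ 2 * w (Ginv u) / g (Ginv u)) (Ioo (0:ℝ) 1) := by
    refine Integrable.mono' (hintIoo.const_mul (w 0)) hφGmeas ?_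
    filter_upwards [ae_restrict_mem measurableSet_Ioo] with u hu
    have hg' := hg (Ginv u)
    have hwle : w (Ginv u) ≤ w 0 := hwdec (hY0 u hu)
    have hu2 : u ^ 2 ≤ 1 := by nlinarith [hu.1, hu.2]
    have hnum : u ^ 2 * w (Ginv u) ≤ w 0 := by nlinarith [hwnn (Ginv u), sq_nonneg u]
    have h1 : u ^ 2 * w (Ginv u) / g (Ginv u) ≤ w 0 * (1 / g (Ginv u)) := by
      rw [mul_one_div]
      exact div_le_div_of_nonneg_right hnum hg'.le |>.trans_eq rfl
    have hwn := hwnn (Ginv u)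
    rw [Real.norm_of_nonneg (by positivity)]
    exact h1
  -- Ginv ≤ Finv on (0,1)
  have hanti : AntitoneOn (fun u => Finv u - Ginv u) (Ioo (0:ℝ) 1) := by
    apply antitoneOn_of_deriv_nonpos (convex_Ioo 0 1)
    · exact fun u hu => ((hF' u hu).sub (hG' u hu)).continuousAt.continuousWithinAt
    · rw [interior_Ioo]
      exact fun u hu => ((hF' u hu).sub (hG' u hu)).differentiableAt.differentiableWithinAt
    · intro x hx
      rw [interior_Ioo] at hx
      rw [HasDerivAt.deriv (f := fun u => Finv u - Ginv u) ((hF' x hx).sub (hG' x hx))]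
      have := one_div_le_one_div_of_le (hg (Ginv x)) (hle x hx)
      linarith
  have hlim : Tendsto (fun u => Finv u - Ginv u) (nhdsWithin 1 (Iio 1)) (nhds 0) := by
    have := hFM.sub hGM
    rwa [sub_self] at this
  have hkey : ∀ u ∈ Ioo (0:ℝ) 1, Ginv u ≤ Finv u := by
    intro u hu
    have h0 : (0:ℝ) ≤ Finv u - Ginv u := by
      refine le_of_tendsto hlim ?_
      filter_upwards [Ioo_mem_nhdsLT_of_mem (⟨hu.2, le_refl 1⟩ : (1:ℝ) ∈ Ioc u 1)] with v hv
      exact hanti hu ⟨lt_trans hu.1 hv.1, hv.2⟩ hv.1.le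
    linarith
  -- pointwise comparison
  have hpt : ∀ u ∈ Ioo (0:ℝ) 1,
      u ^ 2 * w (Finv u) / f (Finv u) ≤ u ^ 2 * w (Ginv u) / g (Ginv u) := by
    intro u hu
    have h1 : w (Finv u) ≤ w (Ginv u) := hwdec (hkey u hu)
    have h2 : g (Ginv u) ≤ f (Finv u) := hle u hu
    apply div_le_div₀ (mul_nonneg (sq_nonneg u) (hwnn _))
      (mul_le_mul_of_nonneg_left h1 (sq_nonneg u)) (hg _) h2
  -- conclude
  rw [intervalIntegral.integral_of_le zero_le_one, intervalIntegral.integral_of_le zero_le_one,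
    integral_Ioc_eq_integral_Ioo, integral_Ioc_eq_integral_Ioo]
  apply integral_mono_of_nonneg
  · filter_upwards [ae_restrict_mem measurableSet_Ioo] with u hu
    have := hwnn (Finv u)
    have := (hf (Finv u))
    positivity
  · exact hφGint
  · filter_upwards [ae_restrict_mem measurableSet_Ioo] with u hu
    exact hpt u hu

/-- Let `X, Y` be nonnegative random variables with densities `f, g`, quantile functions
`Finv, Ginv`, and equal finite right endpoint of support `M`, and let `w` be a decreasing
weight. If `X ≤_disp Y` (i.e. `f(F⁻¹(u)) ≥ g(G⁻¹(u))` on `(0,1)`) then `ξ̄^w(X) ≥ ξ̄^w(Y)`,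
and if `X ≥_disp Y` then `ξ̄^w(X) ≤ ξ̄^w(Y)`, where
`ξ̄^w(X) = -(1/2)∫₀¹ u² w(F⁻¹(u))/f(F⁻¹(u)) du` is the GWCPJ. -/
theorem stmt4 (f g w Finv Ginv : ℝ → ℝ) (M : ℝ)
    (hf : ∀ x, 0 < f x) (hg : ∀ x, 0 < g x)
    (hX0 : ∀ u ∈ Ioo (0:ℝ) 1, 0 ≤ Finv u) (hY0 : ∀ u ∈ Ioo (0:ℝ) 1, 0 ≤ Ginv u)
    (hF' : ∀ u ∈ Ioo (0:ℝ) 1, HasDerivAt Finv (1 / f (Finv u)) u)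
    (hG' : ∀ u ∈ Ioo (0:ℝ) 1, HasDerivAt Ginv (1 / g (Ginv u)) u)
    (hFM : Tendsto Finv (nhdsWithin 1 (Iio 1)) (nhds M))
    (hGM : Tendsto Ginv (nhdsWithin 1 (Iio 1)) (nhds M))
    (hwdec : Antitone w) (hwnn : ∀ x, 0 ≤ w x) :
    ((∀ u ∈ Ioo (0:ℝ) 1, g (Ginv u) ≤ f (Finv u)) →
      -(1/2) * ∫ u in (0:ℝ)..1, u ^ 2 * w (Ginv u) / g (Ginv u) ≤
        -(1/2) * ∫ u in (0:ℝ)..1, u ^ 2 * w (Finv u) / f (Finv u)) ∧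
    ((∀ u ∈ Ioo (0:ℝ) 1, f (Finv u) ≤ g (Ginv u)) →
      -(1/2) * ∫ u in (0:ℝ)..1, u ^ 2 * w (Finv u) / f (Finv u) ≤
        -(1/2) * ∫ u in (0:ℝ)..1, u ^ 2 * w (Ginv u) / g (Ginv u)) := by
  constructor
  · intro h
    have := gwcpj_aux f g w Finv Ginv M hf hg hY0 hF' hG' hFM hGM hwdec hwnn h
    linarith
  · intro h
    have := gwcpj_aux g f w Ginv Finv M hg hf hX0 hG' hF' hGM hFM hwdec hwnn h
    linarith
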